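/- Let (Ω, dist) be a metric space, let X and Y be finite nonempty subsets of Ω, let y ∈ Ω, and let k be an integer with 1 ≤ k ≤ |Y|. For a finite nonempty set S ⊆ Ω with k ≤ |S|, let r_S(y) denote the k-th smallest value of the multiset of distances {dist(y, s) : s ∈ S}, so that the kNN ball of y within S is {z : dist(y, z) ≤ r_S(y)}. Then there exists x ∈ X with dist(y, x) ≤ r_Y(y) if and only if there exists x ∈ X with dist(y, x) ≤ r_{X∪Y}(y). -/

import Mathlib

open List Multiset in
lemma knn_le_iff (m : Multiset ℝ) (k : ℕ) (hk1 : 1 ≤ k) (hk : k ≤ Multiset.card m) (r : ℝ) :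
    (m.sort (· ≤ ·)).getD (k-1) 0 ≤ r ↔ k ≤ Multiset.countP (fun x => x ≤ r) m := by
  set l := m.sort (· ≤ ·) with hl
  have hlen : l.length = Multiset.card m := Multiset.length_sort _
  have hsorted : l.Pairwise (· ≤ ·) := Multiset.pairwise_sort _ _
  have hidx : k - 1 < l.length := by omega
  have hgetD : l.getD (k-1) 0 = l.get ⟨k-1, hidx⟩ := List.getD_eq_get l 0 ⟨k-1, hidx⟩
  have hcount : Multiset.countP (fun x => x ≤ r) m = l.countP (fun x => decide (x ≤ r)) := by
    conv_lhs => rw [← Multiset.sort_eq m (· ≤ ·)]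
    rfl
  rw [hgetD, hcount]
  constructor
  · intro h
    have hsub : l.take k <+ l := List.take_sublist k l
    have htk : (l.take k).countP (fun x => decide (x ≤ r)) = k := by
      rw [List.countP_eq_length.mpr, List.length_take]
      · omega
      · intro a ha
        simp only [decide_eq_true_eq]
        obtain ⟨i, hi, rfl⟩ := List.mem_take_iff_getElem.mp ha
        have : l[i] ≤ l.get ⟨k-1, hidx⟩ := by
          apply hsorted.rel_get_of_le
          simp only [Fin.mk_le_mk]
          omega
        exact this.trans h
    calc k = (l.take k).countP _ := htk.symm
      _ ≤ l.countP _ := hsub.countP_le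
  · intro h
    by_contra hc
    push_neg at hc
    have hdrop : ∀ a ∈ l.drop (k-1), ¬ (a ≤ r) := by
      intro a ha
      obtain ⟨i, hi, rfl⟩ := List.mem_drop_iff_getElem.mp ha
      have : l.get ⟨k-1, hidx⟩ ≤ l[k - 1 + i] := by
        apply hsorted.rel_get_of_le
        simp only [Fin.mk_le_mk]
        omega
      intro hle
      exact absurd (this.trans hle) (not_le.mpr hc)
    have hsplit : l.countP (fun x => decide (x ≤ r)) =
        (l.take (k-1)).countP (fun x => decide (x ≤ r)) + (l.drop (k-1)).countP (fun x => decide (x ≤ r)) := by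
      conv_lhs => rw [← List.take_append_drop (k-1) l]
      rw [List.countP_append]
    rw [hsplit] at h
    have h1 : (l.take (k-1)).countP (fun x => decide (x ≤ r)) ≤ k - 1 := by
      calc _ ≤ (l.take (k-1)).length := List.countP_le_length
        _ ≤ k - 1 := by rw [List.length_take]; omega
    have h2 : (l.drop (k-1)).countP (fun x => decide (x ≤ r)) = 0 := by
      rw [List.countP_eq_zero]
      intro a ha
      simpa using hdrop a ha
    omega

lemma countP_map_filter {α : Type*} [MetricSpace α] [DecidableEq α]
    (S : Finset α) (y : α) (r : ℝ) :
    Multiset.countP (fun x => x ≤ r) (S.val.map (fun s => dist y s)) =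
      (S.filter (fun s => dist y s ≤ r)).card := by
  rw [Multiset.countP_map]
  rfl

/-- The `k`-nearest-neighbor radius of a query point `y` within a finite set `S` of points
of a metric space: the `k`-th smallest value (counted with multiplicity) of the distances
from `y` to the points of `S`. The kNN ball of `y` within `S` is the closed ball of center
`y` and this radius. -/
noncomputable def knnRadius {α : Type*} [MetricSpace α] (k : ℕ) (y : α) (S : Finset α) : ℝ :=
  ((S.val.map (fun s => dist y s)).sort (· ≤ ·)).getD (k - 1) 0

/-- Let `X` and `Y` be finite nonempty subsets of a metric space, `y` a
point, and `1 ≤ k ≤ |Y|`. Then some point of `X` lies in the kNN ball of `y` within `Y`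
if and only if some point of `X` lies in the kNN ball of `y` within `X ∪ Y`:
`(∃ x ∈ X, dist y x ≤ r_Y(y)) ↔ (∃ x ∈ X, dist y x ≤ r_{X∪Y}(y))`. -/
theorem knn_ball_cover_iff_pooled
    {α : Type*} [MetricSpace α] [DecidableEq α]
    (X Y : Finset α) (hX : X.Nonempty) (hY : Y.Nonempty)
    (y : α) (k : ℕ) (hk1 : 1 ≤ k) (hk : k ≤ Y.card) :
    (∃ x ∈ X, dist y x ≤ knnRadius k y Y) ↔ (∃ x ∈ X, dist y x ≤ knnRadius k y (X ∪ Y)) := by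
  set mY : Multiset ℝ := Y.val.map (fun s => dist y s) with hmY
  set mU : Multiset ℝ := (X ∪ Y).val.map (fun s => dist y s) with hmU
  have hkY : k ≤ Multiset.card mY := by simpa [hmY] using hk
  have hkU : k ≤ Multiset.card mU := by
    have : Y.card ≤ (X ∪ Y).card := Finset.card_le_card Finset.subset_union_right
    simp only [hmU, Multiset.card_map]
    calc k ≤ Y.card := hk
      _ ≤ (X ∪ Y).card := this
  set rY := knnRadius k y Y with hrY
  set rU := knnRadius k y (X ∪ Y) with hrU
  have hiffY : ∀ r : ℝ, rY ≤ r ↔ k ≤ Multiset.countP (fun x => x ≤ r) mY :=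
    fun r => knn_le_iff mY k hk1 hkY r
  have hiffU : ∀ r : ℝ, rU ≤ r ↔ k ≤ Multiset.countP (fun x => x ≤ r) mU :=
    fun r => knn_le_iff mU k hk1 hkU r
  have hle : mY ≤ mU := Multiset.map_le_map ((Finset.val_le_iff).mpr Finset.subset_union_right)
  have hrUle : rU ≤ rY := by
    rw [hiffU]
    calc k ≤ Multiset.countP (fun x => x ≤ rY) mY := (hiffY rY).mp le_rfl
      _ ≤ Multiset.countP (fun x => x ≤ rY) mU := Multiset.countP_le_of_le _ hle
  constructor
  · rintro ⟨x, hx, hdx⟩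
    by_cases hc : rY ≤ rU
    · exact ⟨x, hx, hdx.trans hc⟩
    · push_neg at hc
      have hU : k ≤ Multiset.countP (fun z => z ≤ rU) mU := (hiffU rU).mp le_rfl
      have hYlt : Multiset.countP (fun z => z ≤ rU) mY < k := by
        by_contra hcon
        push_neg at hcon
        exact absurd ((hiffY rU).mpr hcon) (not_le.mpr hc)
      rw [countP_map_filter] at hU hYlt
      have hfu : (X ∪ Y).filter (fun s => dist y s ≤ rU) =
          X.filter (fun s => dist y s ≤ rU) ∪ Y.filter (fun s => dist y s ≤ rU) :=
        Finset.filter_union _ _ _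
      have hcard : ((X ∪ Y).filter (fun s => dist y s ≤ rU)).card ≤
          (X.filter (fun s => dist y s ≤ rU)).card + (Y.filter (fun s => dist y s ≤ rU)).card := by
        rw [hfu]; exact Finset.card_union_le _ _
      have hpos : 0 < (X.filter (fun s => dist y s ≤ rU)).card := by omega
      obtain ⟨x', hx'⟩ := Finset.card_pos.mp hpos
      rw [Finset.mem_filter] at hx'
      exact ⟨x', hx'.1, hx'.2⟩
  · rintro ⟨x, hx, hdx⟩
    exact ⟨x, hx, hdx.trans hrUle⟩
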